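/- Under Assumption 1 (f is lower semicontinuous on X × Δ and X is compact) and Assumption 2 (there exists x ∈ X with f(x,δ) ≤ 0 for all δ ∈ Δ), for every N ≥ 1 the scenario value function ω ↦ g_N(ω) is lower semicontinuous on Δ^N (equipped with the product topology). -/

import Mathlib

open MeasureTheory Set

/-- Scenario optimal value `g_N(ω) = inf { c·x : x ∈ X, f(x, δ_i) ≤ 0, i = 1,…,N }`. -/
noncomputable def scenVal {d m N : ℕ} (X : Set (EuclideanSpace ℝ (Fin d)))
    (c : EuclideanSpace ℝ (Fin d))
    (f : EuclideanSpace ℝ (Fin d) → EuclideanSpace ℝ (Fin m) → ℝ)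
    (ω : Fin N → EuclideanSpace ℝ (Fin m)) : ℝ :=
  sInf ((fun x => ∑ i, c i * x i) '' {x ∈ X | ∀ i, f x (ω i) ≤ 0})

/-- Under Assumption 1 (f l.s.c. on X × Δ, X compact) and Assumption 2 (robust feasibility),
for every N ≥ 1 the scenario value function ω ↦ g_N(ω) is lower semicontinuous on Δ^N. -/
theorem stmt_0 {d m : ℕ}
    (X : Set (EuclideanSpace ℝ (Fin d))) (c : EuclideanSpace ℝ (Fin d))
    (Δ : Set (EuclideanSpace ℝ (Fin m))) (hΔne : Δ.Nonempty)
    (f : EuclideanSpace ℝ (Fin d) → EuclideanSpace ℝ (Fin m) → ℝ)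
    -- Assumption 1
    (hlsc : LowerSemicontinuousOn (Function.uncurry f) (X ×ˢ Δ))
    (hXcomp : IsCompact X)
    -- Assumption 2
    (hfeas : ∃ x ∈ X, ∀ δ ∈ Δ, f x δ ≤ 0)
    (N : ℕ) (hN : 1 ≤ N) :
    LowerSemicontinuousOn (fun ω : Fin N → EuclideanSpace ℝ (Fin m) => scenVal X c f ω)
      {ω : Fin N → EuclideanSpace ℝ (Fin m) | ∀ i, ω i ∈ Δ} := by
  classical
  obtain ⟨xb, hxbX, hxbf⟩ := hfeas
  set L : EuclideanSpace ℝ (Fin d) → ℝ := fun x => ∑ i, c i * x i with hLdef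
  have hL : Continuous L := by
    apply continuous_finset_sum
    intro i _
    exact continuous_const.mul (PiLp.continuous_apply 2 _ i)
  set s : Set (Fin N → EuclideanSpace ℝ (Fin m)) := {ω | ∀ i, ω i ∈ Δ} with hsdef
  intro ω hω y hy
  -- pick z strictly between y and scenVal ω
  set z : ℝ := (y + scenVal X c f ω) / 2 with hzdef
  have hyz : y < z := by simp only [hzdef]; linarith
  have hzval : z < scenVal X c f ω := by simp only [hzdef]; linarith
  -- the sublevel compact set
  set K : Set (EuclideanSpace ℝ (Fin d)) := {x ∈ X | L x ≤ z} with hKdef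
  have hKcomp : IsCompact K := by
    have : K = X ∩ L ⁻¹' (Iic z) := by ext x; simp [hKdef]
    rw [this]
    exact hXcomp.inter_right (isClosed_Iic.preimage hL)
  -- bounded below
  have hbdd : ∀ ω' : Fin N → EuclideanSpace ℝ (Fin m),
      BddBelow (L '' {x ∈ X | ∀ i, f x (ω' i) ≤ 0}) := by
    intro ω'
    exact (hXcomp.image hL).bddBelow.mono (image_mono (sep_subset _ _))
  -- every element of K violates a constraint at ω
  have hKviol : ∀ x ∈ K, ∃ j : Fin N, 0 < f x (ω j) := by
    intro x hx
    by_contra h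
    push_neg at h
    have hxfeas : L x ∈ L '' {x ∈ X | ∀ i, f x (ω i) ≤ 0} :=
      ⟨x, ⟨hx.1, h⟩, rfl⟩
    have := csInf_le (hbdd ω) hxfeas
    have : scenVal X c f ω ≤ z := le_trans this hx.2
    linarith
  -- choose neighborhoods via lower semicontinuity
  have hchoice : ∀ x : EuclideanSpace ℝ (Fin d),
      ∃ (j : Fin N) (O V : Set _), IsOpen O ∧ x ∈ O ∧ V ∈ nhdsWithin (ω j) Δ ∧
        (x ∈ K → ∀ x' ∈ O ∩ X, ∀ δ' ∈ V, 0 < f x' δ') := by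
    intro x
    by_cases hx : x ∈ K
    · obtain ⟨j, hj⟩ := hKviol x hx
      have hmem : (x, ω j) ∈ X ×ˢ Δ := ⟨hx.1, hω j⟩
      have hev := hlsc (x, ω j) hmem 0 hj
      rw [nhdsWithin_prod_eq] at hev
      rw [Filter.eventually_iff, Filter.mem_prod_iff] at hev
      obtain ⟨U, hU, V, hV, hUV⟩ := hev
      obtain ⟨O, hOopen, hxO, hOX⟩ := mem_nhdsWithin.mp hU
      refine ⟨j, O, V, hOopen, hxO, hV, fun _ x' hx' δ' hδ' => ?_⟩
      exact hUV (Set.mk_mem_prod (hOX hx') hδ')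
    · exact ⟨⟨0, hN⟩, univ, Δ, isOpen_univ, mem_univ x, self_mem_nhdsWithin,
        fun h => absurd h hx⟩
  choose j O V hOopen hxO hV hpos using hchoice
  -- finite subcover
  obtain ⟨T, hTK, hTcover⟩ := hKcomp.elim_nhds_subcover O
    (fun x _ => (hOopen x).mem_nhds (hxO x))
  -- the neighborhood in the ω-space
  have hEvalTendsto : ∀ i : Fin N,
      Filter.Tendsto (fun ω' : Fin N → EuclideanSpace ℝ (Fin m) => ω' i)
        (nhdsWithin ω s) (nhdsWithin (ω i) Δ) :=
    fun i => (continuous_apply i).continuousWithinAt.tendsto_nhdsWithin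
      (fun ω' hω' => hω' i)
  have hW : (⋂ x ∈ T, (fun ω' : Fin N → EuclideanSpace ℝ (Fin m) => ω' (j x)) ⁻¹' V x)
      ∈ nhdsWithin ω s := by
    refine (Filter.biInter_finset_mem T).mpr fun x _ => ?_
    exact hEvalTendsto (j x) (hV x)
  filter_upwards [hW, self_mem_nhdsWithin] with ω' hω'W hω's
  -- show y < scenVal ω'
  have hne : (L '' {x ∈ X | ∀ i, f x (ω' i) ≤ 0}).Nonempty :=
    ⟨L xb, xb, ⟨hxbX, fun i => hxbf _ (hω's i)⟩, rfl⟩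
  have hge : z ≤ scenVal X c f ω' := by
    apply le_csInf hne
    rintro b ⟨x, ⟨hxX, hxf⟩, rfl⟩
    by_contra hb
    push_neg at hb
    have hxK : x ∈ K := ⟨hxX, le_of_lt hb⟩
    obtain ⟨x₀, hx₀T, hxO₀⟩ := Set.mem_iUnion₂.mp (hTcover hxK)
    have hω'V : ω' (j x₀) ∈ V x₀ := by
      have := Set.mem_iInter₂.mp hω'W x₀ hx₀T
      exact this
    have := hpos x₀ (hTK x₀ hx₀T) x ⟨hxO₀, hxX⟩ (ω' (j x₀)) hω'V
    exact absurd (hxf (j x₀)) (not_le.mpr this)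
  exact lt_of_lt_of_le hyz hge
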